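/- Every tropical meromorphic function f : R → R can be written as f = h − g where g, h : R → R are tropical entire functions (continuous convex piecewise linear functions) with no common roots. -/

import Mathlib

open Set Filter

/-- A tropical meromorphic function: a continuous piecewise linear real function, i.e.
a continuous function that is affine on a one-sided neighbourhood of every point. -/
def TropMero (f : ℝ → ℝ) : Prop :=
  Continuous f ∧ ∀ x : ℝ, ∃ ε > (0 : ℝ),
    (∃ a b : ℝ, ∀ y ∈ Set.Ico x (x + ε), f y = a * y + b) ∧
    (∃ a b : ℝ, ∀ y ∈ Set.Ioc (x - ε) x, f y = a * y + b)

/-- `ω_f(x)`: the jump of the derivative of `f` at `x` (right slope minus left slope).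
`x` is a root of `f` if `ω_f(x) > 0` and a pole if `ω_f(x) < 0`. -/
noncomputable def omega (f : ℝ → ℝ) (x : ℝ) : ℝ :=
  derivWithin f (Set.Ici x) x - derivWithin f (Set.Iic x) x

/-- A tropical entire function: a tropical meromorphic function without poles,
equivalently a convex one. -/
def TropEntire (f : ℝ → ℝ) : Prop := TropMero f ∧ ConvexOn ℝ Set.univ f

/-- The tropical proximity function `m(r, f) = (f⁺(r) + f⁺(-r))/2`. -/
noncomputable def mProx (f : ℝ → ℝ) (r : ℝ) : ℝ := (max (f r) 0 + max (f (-r)) 0) / 2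

/-- The unintegrated counting function `n(t, f) = Σ_{|s| ≤ t, ω_f(s) < 0} |ω_f(s)|`. -/
noncomputable def nCount (f : ℝ → ℝ) (t : ℝ) : ℝ :=
  ∑ᶠ s ∈ {s : ℝ | |s| ≤ t ∧ omega f s < 0}, |omega f s|

/-- The tropical counting function `N(r, f) = (1/2) ∫₀^r n(t, f) dt`. -/
noncomputable def NCount (f : ℝ → ℝ) (r : ℝ) : ℝ := (1 / 2) * ∫ t in (0 : ℝ)..r, nCount f t

/-- The tropical Nevanlinna characteristic `T(r, f) = m(r, f) + N(r, f)`. -/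
noncomputable def Tchar (f : ℝ → ℝ) (r : ℝ) : ℝ := mProx f r + NCount f r

/-- Every tropical meromorphic function `f` can be written as `f = h − g` (tropically,
`f = h ⊘ g`) where `g` and `h` are tropical entire functions with no common roots. -/
lemma derivWithin_Ici_of_Ico {F : ℝ → ℝ} {x ε a b : ℝ} (hε : 0 < ε)
    (h : ∀ y ∈ Set.Ico x (x + ε), F y = a * y + b) :
    derivWithin F (Set.Ici x) x = a := by
  have hev : F =ᶠ[nhdsWithin x (Set.Ici x)] fun y => a * y + b := by
    filter_upwards [inter_mem_nhdsWithin (Set.Ici x) (Iio_mem_nhds (show x < x + ε by linarith))]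
      with y hy
    exact h y ⟨hy.1, hy.2⟩
  rw [hev.derivWithin_eq (h x ⟨le_refl x, by linarith⟩)]
  exact HasDerivWithinAt.derivWithin
    (by simpa using (((hasDerivAt_id x).const_mul a).add_const b).hasDerivWithinAt)
    (uniqueDiffOn_Ici x x Set.self_mem_Ici)

lemma derivWithin_Iic_of_Ioc {F : ℝ → ℝ} {x ε a b : ℝ} (hε : 0 < ε)
    (h : ∀ y ∈ Set.Ioc (x - ε) x, F y = a * y + b) :
    derivWithin F (Set.Iic x) x = a := by
  have hev : F =ᶠ[nhdsWithin x (Set.Iic x)] fun y => a * y + b := by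
    filter_upwards [inter_mem_nhdsWithin (Set.Iic x) (Ioi_mem_nhds (show x - ε < x by linarith))]
      with y hy
    exact h y ⟨hy.2, hy.1⟩
  rw [hev.derivWithin_eq (h x ⟨by linarith, le_refl x⟩)]
  exact HasDerivWithinAt.derivWithin
    (by simpa using (((hasDerivAt_id x).const_mul a).add_const b).hasDerivWithinAt)
    (uniqueDiffOn_Iic x x Set.self_mem_Iic)

lemma omega_eq_of_affine {F : ℝ → ℝ} {x ε a₁ b₁ a₂ b₂ : ℝ} (hε : 0 < ε)
    (h₁ : ∀ y ∈ Set.Ico x (x + ε), F y = a₁ * y + b₁)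
    (h₂ : ∀ y ∈ Set.Ioc (x - ε) x, F y = a₂ * y + b₂) :
    omega F x = a₁ - a₂ := by
  unfold omega
  rw [derivWithin_Ici_of_Ico hε h₁, derivWithin_Iic_of_Ioc hε h₂]

lemma chord_bound {u : ℝ → ℝ} (hu : TropMero u) (hω : ∀ x, 0 ≤ omega u x)
    {p q : ℝ} (hpq : p < q) : ∀ w ∈ Set.Icc p q,
      u w ≤ u p + (u q - u p) / (q - p) * (w - p) := by
  set c : ℝ := (u q - u p) / (q - p) with hc
  set φ : ℝ → ℝ := fun y => u y - (u p + c * (y - p)) with hφ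
  have hφp : φ p = 0 := by simp [hφ]
  have hφq : φ q = 0 := by
    have hqp : q - p ≠ 0 := by linarith
    simp only [hφ, hc]
    rw [div_mul_cancel₀ _ hqp]
    ring
  have hφcont : Continuous φ := by
    apply hu.1.sub
    continuity
  obtain ⟨z₀, hz₀mem, hz₀max⟩ :=
    isCompact_Icc.exists_isMaxOn (nonempty_Icc.2 hpq.le) hφcont.continuousOn
  intro w hw
  have hwm : φ w ≤ φ z₀ := hz₀max hw
  by_cases hm : φ z₀ ≤ 0
  · have : φ w ≤ 0 := le_trans hwm hm
    simp only [hφ] at this; linarith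
  push_neg at hm
  exfalso
  set m := φ z₀ with hmdef
  set S : Set ℝ := Set.Icc p q ∩ φ ⁻¹' {m} with hS
  have hSclosed : IsClosed S := isClosed_Icc.inter (isClosed_singleton.preimage hφcont)
  have hSne : S.Nonempty := ⟨z₀, hz₀mem, rfl⟩
  have hSbdd : BddAbove S := (bddAbove_Icc).mono (Set.inter_subset_left)
  set z := sSup S with hz
  have hzS : z ∈ S := hSclosed.csSup_mem hSne hSbdd
  have hzIcc : z ∈ Set.Icc p q := hzS.1
  have hφz : φ z = m := hzS.2
  have hzp : p < z := by
    rcases eq_or_lt_of_le hzIcc.1 with h | h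
    · exfalso; rw [← h] at hφz; rw [hφp] at hφz; linarith
    · exact h
  have hzq : z < q := by
    rcases eq_or_lt_of_le hzIcc.2 with h | h
    · exfalso; rw [h] at hφz; rw [hφq] at hφz; linarith
    · exact h
  obtain ⟨ε, hε, ⟨a₁, b₁, h₁⟩, ⟨a₂, b₂, h₂⟩⟩ := hu.2 z
  have hωz : omega u z = a₁ - a₂ := omega_eq_of_affine hε h₁ h₂
  -- right point
  set δ := min ε (q - z) with hδdef
  have hδ : 0 < δ := lt_min hε (by linarith)
  set t := z + δ / 2 with ht
  have htIco : t ∈ Set.Ico z (z + ε) := by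
    constructor
    · simp [ht]; linarith
    · have : δ ≤ ε := min_le_left _ _
      simp [ht]; linarith
  have htIcc : t ∈ Set.Icc p q := by
    have h1 : δ ≤ q - z := min_le_right _ _
    constructor
    · simp [ht]; linarith
    · simp [ht]; linarith
  have htz : z < t := by simp [ht]; linarith
  have htne : φ t ≠ m := by
    intro hcon
    have : t ∈ S := ⟨htIcc, hcon⟩
    have : t ≤ z := le_csSup hSbdd this
    linarith
  have htlt : φ t < m := lt_of_le_of_ne (hz₀max htIcc) htne
  have hut : u t = a₁ * t + b₁ := h₁ t htIco
  have huz : u z = a₁ * z + b₁ := h₁ z ⟨le_refl z, by linarith⟩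
  have ha₁ : a₁ < c := by
    simp only [hφ] at htlt hφz
    rw [← hφz] at htlt
    rw [hut, huz] at htlt
    nlinarith
  -- left point
  set δ' := min ε (z - p) with hδ'def
  have hδ' : 0 < δ' := lt_min hε (by linarith)
  set t' := z - δ' / 2 with ht'
  have ht'Ioc : t' ∈ Set.Ioc (z - ε) z := by
    have : δ' ≤ ε := min_le_left _ _
    constructor
    · simp [ht']; linarith
    · simp [ht']; linarith
  have ht'Icc : t' ∈ Set.Icc p q := by
    have h1 : δ' ≤ z - p := min_le_right _ _
    constructor
    · simp [ht']; linarith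
    · simp [ht']; linarith
  have ht'z : t' < z := by simp [ht']; linarith
  have ht'le : φ t' ≤ m := hz₀max ht'Icc
  have hut' : u t' = a₂ * t' + b₂ := h₂ t' ht'Ioc
  have huz' : u z = a₂ * z + b₂ := h₂ z ⟨by linarith, le_refl z⟩
  have ha₂ : c ≤ a₂ := by
    simp only [hφ] at ht'le hφz
    rw [← hφz] at ht'le
    rw [hut', huz'] at ht'le
    nlinarith
  have := hω z
  rw [hωz] at this
  linarith

lemma convexOn_of_omega_nonneg {u : ℝ → ℝ} (hu : TropMero u) (hω : ∀ x, 0 ≤ omega u x) :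
    ConvexOn ℝ Set.univ u := by
  refine ⟨convex_univ, fun p _ q _ a b ha hb hab => ?_⟩
  simp only [smul_eq_mul]
  rcases lt_trichotomy p q with hpq | hpq | hpq
  · have hb' : a * p + b * q - p = b * (q - p) := by
      rw [show a = 1 - b by linarith]; ring
    have hq' : q - (a * p + b * q) = a * (q - p) := by
      rw [show b = 1 - a by linarith]; ring
    have hw : a * p + b * q ∈ Set.Icc p q := by
      constructor
      · nlinarith [mul_nonneg hb (show (0:ℝ) ≤ q - p by linarith)]
      · nlinarith [mul_nonneg ha (show (0:ℝ) ≤ q - p by linarith)]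
    have := chord_bound hu hω hpq _ hw
    rw [hb'] at this
    have hqp : q - p ≠ 0 := by linarith
    calc u (a * p + b * q) ≤ u p + (u q - u p) / (q - p) * (b * (q - p)) := this
      _ = a * u p + b * u q := by
          rw [show a = 1 - b by linarith]; field_simp; ring
  · subst hpq
    rw [show a * p + b * p = p by linear_combination p * hab]
    have : a * u p + b * u p = u p := by linear_combination (u p) * hab
    linarith
  · have hb' : a * p + b * q - q = a * (p - q) := by
      rw [show b = 1 - a by linarith]; ring
    have hp' : p - (a * p + b * q) = b * (p - q) := by
      rw [show a = 1 - b by linarith]; ring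
    have hw : a * p + b * q ∈ Set.Icc q p := by
      constructor
      · nlinarith [mul_nonneg ha (show (0:ℝ) ≤ p - q by linarith)]
      · nlinarith [mul_nonneg hb (show (0:ℝ) ≤ p - q by linarith)]
    have := chord_bound hu hω hpq _ hw
    rw [hb'] at this
    have hqp : p - q ≠ 0 := by linarith
    calc u (a * p + b * q) ≤ u q + (u p - u q) / (p - q) * (a * (p - q)) := this
      _ = a * u p + b * u q := by
          rw [show b = 1 - a by linarith]; field_simp; ring

/-- A punctured neighbourhood of any point contains no nonzero jumps. -/
lemma omega_eq_zero_near {F : ℝ → ℝ} (hF : TropMero F) (x : ℝ) :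
    ∃ ε > (0:ℝ), ∀ s ∈ Set.Ioo (x - ε) (x + ε), s ≠ x → omega F s = 0 := by
  obtain ⟨ε, hε, ⟨a₁, b₁, h₁⟩, ⟨a₂, b₂, h₂⟩⟩ := hF.2 x
  refine ⟨ε, hε, fun s hs hsx => ?_⟩
  rcases lt_or_gt_of_ne hsx with hlt | hgt
  · -- s < x : use left piece
    set ε' := min (x - s) (s - (x - ε)) with hε'
    have h1 : ε' ≤ x - s := min_le_left _ _
    have h2 : ε' ≤ s - (x - ε) := min_le_right _ _
    have hε'pos : 0 < ε' := lt_min (by linarith) (by linarith [hs.1])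
    have hsub₁ : ∀ y ∈ Set.Ico s (s + ε'), F y = a₂ * y + b₂ := fun y hy =>
      h₂ y ⟨by linarith [hy.1, hs.1], by linarith [hy.2]⟩
    have hsub₂ : ∀ y ∈ Set.Ioc (s - ε') s, F y = a₂ * y + b₂ := fun y hy =>
      h₂ y ⟨by linarith [hy.1, hs.1], by linarith [hy.2]⟩
    rw [omega_eq_of_affine hε'pos hsub₁ hsub₂]; ring
  · -- x < s : use right piece
    set ε' := min (s - x) (x + ε - s) with hε'
    have h1 : ε' ≤ s - x := min_le_left _ _
    have h2 : ε' ≤ x + ε - s := min_le_right _ _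
    have hε'pos : 0 < ε' := lt_min (by linarith) (by linarith [hs.2])
    have hsub₁ : ∀ y ∈ Set.Ico s (s + ε'), F y = a₁ * y + b₁ := fun y hy =>
      h₁ y ⟨by linarith [hy.1], by linarith [hy.2]⟩
    have hsub₂ : ∀ y ∈ Set.Ioc (s - ε') s, F y = a₁ * y + b₁ := fun y hy =>
      h₁ y ⟨by linarith [hy.1], by linarith [hy.2, hs.2]⟩
    rw [omega_eq_of_affine hε'pos hsub₁ hsub₂]; ring

/-- Weight of a pole. -/
noncomputable def pw (f : ℝ → ℝ) (s : ℝ) : ℝ := max (-(omega f s)) 0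

lemma pw_nonneg (f : ℝ → ℝ) (s : ℝ) : 0 ≤ pw f s := le_max_right _ _

/-- The basic hinge function with kink at `s`, vanishing near `0`. -/
noncomputable def hinge (s x : ℝ) : ℝ :=
  if 0 ≤ s then max (x - s) 0 else max (s - x) 0

lemma hinge_continuous (s : ℝ) : Continuous (hinge s) := by
  unfold hinge; split_ifs <;> fun_prop

lemma hinge_convex (s : ℝ) : ConvexOn ℝ Set.univ (hinge s) := by
  unfold hinge
  split_ifs with h
  · have h1 : ConvexOn ℝ Set.univ (fun x : ℝ => x - s) :=
      (convexOn_id convex_univ).sub (concaveOn_const s convex_univ)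
    have h2 : ConvexOn ℝ Set.univ (fun _ : ℝ => (0:ℝ)) := convexOn_const 0 convex_univ
    simpa [Pi.sup_def] using h1.sup h2
  · have h1 : ConvexOn ℝ Set.univ (fun x : ℝ => s - x) :=
      (convexOn_const s convex_univ).sub (concaveOn_id convex_univ)
    have h2 : ConvexOn ℝ Set.univ (fun _ : ℝ => (0:ℝ)) := convexOn_const 0 convex_univ
    simpa [Pi.sup_def] using h1.sup h2

lemma hinge_support {s x : ℝ} (h : hinge s x ≠ 0) : |s| ≤ |x| := by
  unfold hinge at h
  split_ifs at h with hs
  · have hpos : 0 < x - s := by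
      by_contra hc; push_neg at hc
      exact h (max_eq_right hc)
    calc |s| = s := abs_of_nonneg hs
      _ ≤ x := by linarith
      _ ≤ |x| := le_abs_self x
  · have hpos : 0 < s - x := by
      by_contra hc; push_neg at hc
      exact h (max_eq_right hc)
    calc |s| = -s := abs_of_neg (by linarith)
      _ ≤ -x := by linarith
      _ ≤ |x| := neg_le_abs x

lemma convexOn_finset_sum {ι : Type*} (S : Finset ι) (F : ι → ℝ → ℝ)
    (h : ∀ i ∈ S, ConvexOn ℝ Set.univ (F i)) :
    ConvexOn ℝ Set.univ (fun x => ∑ i ∈ S, F i x) := by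
  classical
  induction S using Finset.induction with
  | empty => simpa using convexOn_const 0 convex_univ
  | insert a s hi ih =>
    simp only [Finset.sum_insert hi]
    exact (h a (Finset.mem_insert_self a s)).add
      (ih fun i hs => h i (Finset.mem_insert_of_mem hs))

lemma hinge_affine {s x ε : ℝ} (hε : 0 < ε)
    (hs : s = x ∨ s ∉ Set.Ioo (x - ε) (x + ε)) :
    ∃ c₁ d₁ c₂ d₂ : ℝ,
      (∀ y ∈ Set.Ico x (x + ε), hinge s y = c₁ * y + d₁) ∧
      (∀ y ∈ Set.Ioc (x - ε) x, hinge s y = c₂ * y + d₂) ∧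
      c₁ - c₂ = if s = x then 1 else 0 := by
  rcases hs with rfl | hnot
  · by_cases h0 : 0 ≤ s
    · refine ⟨1, -s, 0, 0, fun y hy => ?_, fun y hy => ?_, by simp⟩
      · simp only [hinge, if_pos h0, max_eq_left (by linarith [hy.1] : (0:ℝ) ≤ y - s)]; ring
      · simp only [hinge, if_pos h0, max_eq_right (by linarith [hy.2] : y - s ≤ 0)]; ring
    · refine ⟨0, 0, -1, s, fun y hy => ?_, fun y hy => ?_, by simp⟩
      · simp only [hinge, if_neg h0, max_eq_right (by linarith [hy.1] : s - y ≤ 0)]; ring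
      · simp only [hinge, if_neg h0, max_eq_left (by linarith [hy.2] : (0:ℝ) ≤ s - y)]; ring
  · have hcases : s ≤ x - ε ∨ x + ε ≤ s := by
      by_contra hc; push_neg at hc
      exact hnot ⟨by linarith [hc.1], by linarith [hc.2]⟩
    rcases hcases with hle | hge
    · have hsx : s ≠ x := by intro h; rw [h] at hle; linarith
      by_cases h0 : 0 ≤ s
      · refine ⟨1, -s, 1, -s, fun y hy => ?_, fun y hy => ?_, by simp [hsx]⟩
        · simp only [hinge, if_pos h0, max_eq_left (by linarith [hy.1] : (0:ℝ) ≤ y - s)]; ring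
        · simp only [hinge, if_pos h0, max_eq_left (by linarith [hy.1] : (0:ℝ) ≤ y - s)]; ring
      · refine ⟨0, 0, 0, 0, fun y hy => ?_, fun y hy => ?_, by simp [hsx]⟩
        · simp only [hinge, if_neg h0, max_eq_right (by linarith [hy.1] : s - y ≤ 0)]; ring
        · simp only [hinge, if_neg h0, max_eq_right (by linarith [hy.1] : s - y ≤ 0)]; ring
    · have hsx : s ≠ x := by intro h; rw [h] at hge; linarith
      by_cases h0 : 0 ≤ s
      · refine ⟨0, 0, 0, 0, fun y hy => ?_, fun y hy => ?_, by simp [hsx]⟩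
        · simp only [hinge, if_pos h0, max_eq_right (by linarith [hy.2] : y - s ≤ 0)]; ring
        · simp only [hinge, if_pos h0, max_eq_right (by linarith [hy.2] : y - s ≤ 0)]; ring
      · refine ⟨-1, s, -1, s, fun y hy => ?_, fun y hy => ?_, by simp [hsx]⟩
        · simp only [hinge, if_neg h0, max_eq_left (by linarith [hy.2] : (0:ℝ) ≤ s - y)]; ring
        · simp only [hinge, if_neg h0, max_eq_left (by linarith [hy.2] : (0:ℝ) ≤ s - y)]; ring

lemma pw_support_finite {f : ℝ → ℝ} (hf : TropMero f) (M : ℝ) :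
    (Function.support (pw f) ∩ Set.Icc (-M) M).Finite := by
  choose ε hε hiso using omega_eq_zero_near hf
  have hcover : Set.Icc (-M) M ⊆ ⋃ x : ℝ, Set.Ioo (x - ε x) (x + ε x) := fun y _ =>
    Set.mem_iUnion.2 ⟨y, ⟨by linarith [hε y], by linarith [hε y]⟩⟩
  obtain ⟨F, hF⟩ := isCompact_Icc.elim_finite_subcover
    (fun x => Set.Ioo (x - ε x) (x + ε x)) (fun x => isOpen_Ioo) hcover
  apply F.finite_toSet.subset
  rintro s ⟨hsupp, hsM⟩
  have := hF hsM
  simp only [Set.mem_iUnion, exists_prop] at this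
  obtain ⟨x, hxF, hsx⟩ := this
  by_cases hsx' : s = x
  · subst hsx'; exact hxF
  · exact absurd (by simp [pw, hiso x s hsx hsx'] : pw f s = 0) hsupp

noncomputable def gfun (f : ℝ → ℝ) (x : ℝ) : ℝ := ∑ᶠ s, pw f s * hinge s x

lemma gfun_eq {f : ℝ → ℝ} (hf : TropMero f) {M x : ℝ} (hM : |x| ≤ M) :
    gfun f x = ∑ s ∈ (pw_support_finite hf M).toFinset, pw f s * hinge s x := by
  apply finsum_eq_sum_of_support_subset
  intro s hs
  have h1 : pw f s ≠ 0 := fun h => hs (by simp [h])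
  have h2 : hinge s x ≠ 0 := fun h => hs (by simp [h])
  have hb : |s| ≤ M := le_trans (by
    unfold hinge at h2
    split_ifs at h2 with hss
    · have hpos : 0 < x - s := by
        by_contra hc; push_neg at hc; exact h2 (max_eq_right hc)
      calc |s| = s := abs_of_nonneg hss
        _ ≤ x := by linarith
        _ ≤ |x| := le_abs_self x
    · have hpos : 0 < s - x := by
        by_contra hc; push_neg at hc; exact h2 (max_eq_right hc)
      calc |s| = -s := abs_of_neg (by linarith)
        _ ≤ -x := by linarith
        _ ≤ |x| := neg_le_abs x) hM
  rw [Set.Finite.coe_toFinset]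
  exact ⟨h1, abs_le.1 hb⟩

/-- Local affine data for `gfun` with jump exactly `pw f x`. -/
lemma gfun_data {f : ℝ → ℝ} (hf : TropMero f) (x : ℝ) :
    ∃ ε > (0:ℝ), ∃ a₁ b₁ a₂ b₂ : ℝ,
      (∀ y ∈ Set.Ico x (x + ε), gfun f y = a₁ * y + b₁) ∧
      (∀ y ∈ Set.Ioc (x - ε) x, gfun f y = a₂ * y + b₂) ∧
      a₁ - a₂ = pw f x := by
  classical
  obtain ⟨ε₀, hε₀, hiso⟩ := omega_eq_zero_near hf x
  set ε := min ε₀ 1 with hεdef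
  have hε : 0 < ε := lt_min hε₀ one_pos
  have hε1 : ε ≤ 1 := min_le_right _ _
  have hε0 : ε ≤ ε₀ := min_le_left _ _
  set M := |x| + 1 with hM
  set S := (pw_support_finite hf M).toFinset with hSdef
  have hSx : ∀ s ∈ S, s = x ∨ s ∉ Set.Ioo (x - ε) (x + ε) := by
    intro s hs
    by_cases hsx : s = x
    · exact Or.inl hsx
    · right; intro hmem
      have hmem' : s ∈ Set.Ioo (x - ε₀) (x + ε₀) :=
        ⟨by linarith [hmem.1], by linarith [hmem.2]⟩
      have : pw f s = 0 := by simp [pw, hiso s hmem' hsx]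
      have hsupp := (Set.Finite.mem_toFinset _).1 hs
      exact hsupp.1 this
  have hAff : ∀ s : ℝ, ∃ c₁ d₁ c₂ d₂ : ℝ, (s = x ∨ s ∉ Set.Ioo (x - ε) (x + ε)) →
      ((∀ y ∈ Set.Ico x (x + ε), hinge s y = c₁ * y + d₁) ∧
       (∀ y ∈ Set.Ioc (x - ε) x, hinge s y = c₂ * y + d₂) ∧
       c₁ - c₂ = if s = x then 1 else 0) := by
    intro s
    by_cases h : s = x ∨ s ∉ Set.Ioo (x - ε) (x + ε)
    · obtain ⟨c₁, d₁, c₂, d₂, h1, h2, h3⟩ := hinge_affine hε h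
      exact ⟨c₁, d₁, c₂, d₂, fun _ => ⟨h1, h2, h3⟩⟩
    · exact ⟨0, 0, 0, 0, fun hc => absurd hc h⟩
  choose c₁ d₁ c₂ d₂ hC using hAff
  refine ⟨ε, hε, ∑ s ∈ S, pw f s * c₁ s, ∑ s ∈ S, pw f s * d₁ s,
    ∑ s ∈ S, pw f s * c₂ s, ∑ s ∈ S, pw f s * d₂ s, ?_, ?_, ?_⟩
  · intro y hy
    have hyM : |y| ≤ M := by
      have h1 : x ≤ y := hy.1
      have h2 : y < x + ε := hy.2
      rw [abs_le]
      refine ⟨?_, ?_⟩ <;> simp only [hM]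
      · linarith [neg_abs_le x]
      · linarith [le_abs_self x]
    rw [gfun_eq hf hyM]
    rw [Finset.sum_mul, ← Finset.sum_add_distrib]
    apply Finset.sum_congr rfl
    intro s hs
    rw [((hC s) (hSx s hs)).1 y hy]; ring
  · intro y hy
    have hyM : |y| ≤ M := by
      have h1 : x - ε < y := hy.1
      have h2 : y ≤ x := hy.2
      rw [abs_le]
      refine ⟨?_, ?_⟩ <;> simp only [hM]
      · linarith [neg_abs_le x]
      · linarith [le_abs_self x]
    rw [gfun_eq hf hyM]
    rw [Finset.sum_mul, ← Finset.sum_add_distrib]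
    apply Finset.sum_congr rfl
    intro s hs
    rw [((hC s) (hSx s hs)).2.1 y hy]; ring
  · rw [← Finset.sum_sub_distrib]
    have : ∀ s ∈ S, pw f s * c₁ s - pw f s * c₂ s = if s = x then pw f s else 0 := by
      intro s hs
      rw [show pw f s * c₁ s - pw f s * c₂ s = pw f s * (c₁ s - c₂ s) by ring,
        ((hC s) (hSx s hs)).2.2]
      split_ifs <;> ring
    rw [Finset.sum_congr rfl this, Finset.sum_ite_eq' S x (fun s => pw f s)]
    by_cases hx : x ∈ S
    · simp [hx]
    · simp only [hx, if_false]
      have : ¬ (pw f x ≠ 0 ∧ x ∈ Set.Icc (-M) M) := by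
        intro hc
        exact hx ((Set.Finite.mem_toFinset _).2 ⟨hc.1, hc.2⟩)
      have hxIcc : x ∈ Set.Icc (-M) M := by
        rw [Set.mem_Icc, hM]
        constructor
        · linarith [neg_abs_le x]
        · linarith [le_abs_self x]
      by_cases hpw : pw f x = 0
      · rw [hpw]
      · exact absurd ⟨hpw, hxIcc⟩ this

lemma continuous_of_onesided_affine {u : ℝ → ℝ}
    (h : ∀ x : ℝ, ∃ ε > (0:ℝ),
      (∃ a b : ℝ, ∀ y ∈ Set.Ico x (x + ε), u y = a * y + b) ∧
      (∃ a b : ℝ, ∀ y ∈ Set.Ioc (x - ε) x, u y = a * y + b)) :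
    Continuous u := by
  rw [continuous_iff_continuousAt]
  intro x
  obtain ⟨ε, hε, ⟨a₁, b₁, h₁⟩, ⟨a₂, b₂, h₂⟩⟩ := h x
  rw [continuousAt_iff_continuous_left_right]
  constructor
  · apply ContinuousWithinAt.congr_of_eventuallyEq
      (((continuous_const.mul continuous_id).add continuous_const).continuousWithinAt :
        ContinuousWithinAt (fun y => a₂ * y + b₂) (Set.Iic x) x)
    · filter_upwards [inter_mem_nhdsWithin (Set.Iic x)
        (Ioi_mem_nhds (show x - ε < x by linarith))] with y hy
      exact h₂ y ⟨hy.2, hy.1⟩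
    · exact h₂ x ⟨by linarith, le_refl x⟩
  · apply ContinuousWithinAt.congr_of_eventuallyEq
      (((continuous_const.mul continuous_id).add continuous_const).continuousWithinAt :
        ContinuousWithinAt (fun y => a₁ * y + b₁) (Set.Ici x) x)
    · filter_upwards [inter_mem_nhdsWithin (Set.Ici x)
        (Iio_mem_nhds (show x < x + ε by linarith))] with y hy
      exact h₁ y ⟨hy.1, hy.2⟩
    · exact h₁ x ⟨le_refl x, by linarith⟩

theorem tropMero_eq_quotient_of_entire (f : ℝ → ℝ) (hf : TropMero f) :
    ∃ g h : ℝ → ℝ, TropEntire g ∧ TropEntire h ∧ (∀ x, f x = h x - g x) ∧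
      ¬ ∃ x : ℝ, 0 < omega g x ∧ 0 < omega h x := by
  classical
  set g := gfun f with hg
  -- TropMero g
  have hgdata := gfun_data hf
  have hgmero : TropMero g := by
    refine ⟨continuous_of_onesided_affine fun x => ?_, fun x => ?_⟩
    · obtain ⟨ε, hε, a₁, b₁, a₂, b₂, h₁, h₂, _⟩ := hgdata x
      exact ⟨ε, hε, ⟨a₁, b₁, h₁⟩, ⟨a₂, b₂, h₂⟩⟩
    · obtain ⟨ε, hε, a₁, b₁, a₂, b₂, h₁, h₂, _⟩ := hgdata x
      exact ⟨ε, hε, ⟨a₁, b₁, h₁⟩, ⟨a₂, b₂, h₂⟩⟩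
  have homega_g : ∀ x, omega g x = pw f x := by
    intro x
    obtain ⟨ε, hε, a₁, b₁, a₂, b₂, h₁, h₂, hd⟩ := hgdata x
    rw [omega_eq_of_affine hε h₁ h₂, hd]
  -- convexity of g
  have hgconv : ConvexOn ℝ Set.univ g := by
    refine ⟨convex_univ, fun p _ q _ a b ha hb hab => ?_⟩
    set M := max |p| |q| with hM
    have hpM : |p| ≤ M := le_max_left _ _
    have hqM : |q| ≤ M := le_max_right _ _
    have hcomb : |a • p + b • q| ≤ M := by
      simp only [smul_eq_mul]
      calc |a * p + b * q| ≤ |a * p| + |b * q| := abs_add_le _ _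
        _ = a * |p| + b * |q| := by rw [abs_mul, abs_mul, abs_of_nonneg ha, abs_of_nonneg hb]
        _ ≤ a * M + b * M := by
            apply add_le_add <;> apply mul_le_mul_of_nonneg_left <;> assumption
        _ = M := by rw [← add_mul, hab, one_mul]
    have hconvS := convexOn_finset_sum (pw_support_finite hf M).toFinset
      (fun s x => pw f s * hinge s x) (fun s _ => by
        simpa [smul_eq_mul] using (hinge_convex s).smul (pw_nonneg f s))
    have := hconvS.2 (Set.mem_univ p) (Set.mem_univ q) ha hb hab
    simpa only [hg, gfun_eq hf hpM, gfun_eq hf hqM, gfun_eq hf hcomb] using this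
  -- h := f + g
  set H := fun x => f x + g x with hH
  have hHmero : TropMero H := by
    refine ⟨hf.1.add hgmero.1, fun x => ?_⟩
    obtain ⟨ε₁, hε₁, ⟨a₁, b₁, h₁⟩, ⟨a₂, b₂, h₂⟩⟩ := hf.2 x
    obtain ⟨ε₂, hε₂, c₁, d₁, c₂, d₂, k₁, k₂, _⟩ := hgdata x
    have k₁' : ∀ y ∈ Set.Ico x (x + ε₂), g y = c₁ * y + d₁ := k₁
    have k₂' : ∀ y ∈ Set.Ioc (x - ε₂) x, g y = c₂ * y + d₂ := k₂
    refine ⟨min ε₁ ε₂, lt_min hε₁ hε₂, ⟨a₁ + c₁, b₁ + d₁, fun y hy => ?_⟩,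
      ⟨a₂ + c₂, b₂ + d₂, fun y hy => ?_⟩⟩
    · have hy₁ : y ∈ Set.Ico x (x + ε₁) :=
        ⟨hy.1, lt_of_lt_of_le hy.2 (by linarith [min_le_left ε₁ ε₂])⟩
      have hy₂ : y ∈ Set.Ico x (x + ε₂) :=
        ⟨hy.1, lt_of_lt_of_le hy.2 (by linarith [min_le_right ε₁ ε₂])⟩
      rw [hH]; simp only; rw [h₁ y hy₁, k₁' y hy₂]; ring
    · have hy₁ : y ∈ Set.Ioc (x - ε₁) x :=
        ⟨lt_of_le_of_lt (by linarith [min_le_left ε₁ ε₂]) hy.1, hy.2⟩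
      have hy₂ : y ∈ Set.Ioc (x - ε₂) x :=
        ⟨lt_of_le_of_lt (by linarith [min_le_right ε₁ ε₂]) hy.1, hy.2⟩
      rw [hH]; simp only; rw [h₂ y hy₁, k₂' y hy₂]; ring
  have homega_H : ∀ x, omega H x = omega f x + pw f x := by
    intro x
    obtain ⟨ε₁, hε₁, ⟨a₁, b₁, h₁⟩, ⟨a₂, b₂, h₂⟩⟩ := hf.2 x
    obtain ⟨ε₂, hε₂, c₁, d₁, c₂, d₂, k₁, k₂, hd⟩ := hgdata x
    have k₁' : ∀ y ∈ Set.Ico x (x + ε₂), g y = c₁ * y + d₁ := k₁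
    have k₂' : ∀ y ∈ Set.Ioc (x - ε₂) x, g y = c₂ * y + d₂ := k₂
    set ε := min ε₁ ε₂ with hε'
    have hε : 0 < ε := lt_min hε₁ hε₂
    have hf₁ : ∀ y ∈ Set.Ico x (x + ε), f y = a₁ * y + b₁ := fun y hy =>
      h₁ y ⟨hy.1, lt_of_lt_of_le hy.2 (by linarith [min_le_left ε₁ ε₂])⟩
    have hf₂ : ∀ y ∈ Set.Ioc (x - ε) x, f y = a₂ * y + b₂ := fun y hy =>
      h₂ y ⟨lt_of_le_of_lt (by linarith [min_le_left ε₁ ε₂]) hy.1, hy.2⟩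
    have hg₁ : ∀ y ∈ Set.Ico x (x + ε), g y = c₁ * y + d₁ := fun y hy =>
      k₁' y ⟨hy.1, lt_of_lt_of_le hy.2 (by linarith [min_le_right ε₁ ε₂])⟩
    have hg₂ : ∀ y ∈ Set.Ioc (x - ε) x, g y = c₂ * y + d₂ := fun y hy =>
      k₂' y ⟨lt_of_le_of_lt (by linarith [min_le_right ε₁ ε₂]) hy.1, hy.2⟩
    have hH₁ : ∀ y ∈ Set.Ico x (x + ε), H y = (a₁ + c₁) * y + (b₁ + d₁) := fun y hy => by
      rw [hH]; simp only; rw [hf₁ y hy, hg₁ y hy]; ring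
    have hH₂ : ∀ y ∈ Set.Ioc (x - ε) x, H y = (a₂ + c₂) * y + (b₂ + d₂) := fun y hy => by
      rw [hH]; simp only; rw [hf₂ y hy, hg₂ y hy]; ring
    rw [omega_eq_of_affine hε hH₁ hH₂, omega_eq_of_affine hε hf₁ hf₂, ← hd]
    ring
  have homega_H' : ∀ x, omega H x = max (omega f x) 0 := by
    intro x
    rw [homega_H x]
    rcases le_or_gt 0 (omega f x) with h | h
    · rw [max_eq_left h]
      have : pw f x = 0 := max_eq_right (by linarith)
      rw [this]; ring
    · rw [max_eq_right h.le]
      have : pw f x = -(omega f x) := max_eq_left (by linarith)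
      rw [this]; ring
  have hHconv : ConvexOn ℝ Set.univ H :=
    convexOn_of_omega_nonneg hHmero fun x => by
      rw [homega_H' x]; exact le_max_right _ _
  refine ⟨g, H, ⟨hgmero, hgconv⟩, ⟨hHmero, hHconv⟩, fun x => by rw [hH]; ring, ?_⟩
  rintro ⟨x, hgx, hHx⟩
  rw [homega_g x] at hgx
  rw [homega_H' x] at hHx
  have h1 : omega f x < 0 := by
    by_contra hc; push_neg at hc
    rw [show pw f x = 0 from max_eq_right (by linarith)] at hgx
    exact lt_irrefl 0 hgx
  rw [max_eq_right h1.le] at hHx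
  exact lt_irrefl 0 hHx
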